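/- Let x, y, u, v, a, β, τ ∈ ℂ satisfy x·u = 1, y·v·β = -(x·v + u·y), y·v·a = 1, x·u·τ + (x·v + u·y)·β + y·v·a = 0, u = y²·a, and v = x·y. Then y ≠ 0, a ≠ 0, and the solution is completely determined by a and y: x = (y²·a)⁻¹, u = y²·a, v = (y·a)⁻¹, β = -(y³·a)⁻¹ - y³·a², and τ = a³·y⁶ + 1 + (a³·y⁶)⁻¹. (This is the uniqueness half of the classification: every separating SU(3)-state function belongs to the two-parameter family indexed by nonzero a and y.) -/

import Mathlib

/-- Uniqueness half of the classification of separating SU(3)-state functions: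
the Reidemeister-move equations force `y ≠ 0`, `a ≠ 0`, and determine the
solution completely in terms of `a` and `y`. -/
theorem su3_state_function_unique (x y u v a β τ : ℂ)
    (h1 : x * u = 1) (h2 : y * v * β = -(x * v + u * y)) (h3 : y * v * a = 1)
    (h4 : x * u * τ + (x * v + u * y) * β + y * v * a = 0)
    (h5 : u = y ^ 2 * a) (h6 : v = x * y) :
    y ≠ 0 ∧ a ≠ 0 ∧
    x = (y ^ 2 * a)⁻¹ ∧ u = y ^ 2 * a ∧ v = (y * a)⁻¹ ∧
    β = -(y ^ 3 * a)⁻¹ - y ^ 3 * a ^ 2 ∧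
    τ = a ^ 3 * y ^ 6 + 1 + (a ^ 3 * y ^ 6)⁻¹ := by
  subst h5 h6
  have hy : y ≠ 0 := by intro h; rw [h] at h3; simp at h3
  have ha : a ≠ 0 := by intro h; rw [h] at h3; simp at h3
  have hxv : x = (y ^ 2 * a)⁻¹ := eq_inv_of_mul_eq_one_left h1
  subst hxv
  rw [h1] at h4
  field_simp at h2 h4 ⊢
  have hbeq : β * (y ^ 3 * a) = -1 - y ^ 3 * a * (y ^ 3 * a ^ 2) := by
    apply mul_left_cancel₀ (show (y ^ 3 * a : ℂ) ≠ 0 by simp [pow_ne_zero, hy, ha])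
    linear_combination (y ^ 3 * a) * h2
  refine ⟨hy, ha, trivial, trivial, trivial, by linear_combination hbeq, ?_⟩
  linear_combination (y ^ 3 * a) * h4 - (1 + y ^ 6 * a ^ 3) * h2
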